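/- Let n ≥ 1 and let ξ be an n×n complex symmetric matrix whose real part Re(ξ) is positive semidefinite or negative semidefinite and whose imaginary part Im(ξ) is positive semidefinite or negative semidefinite. Then for every real symmetric n×n matrix H, the trace Tr(ξ·H·ξ̄·H) is a real number and satisfies Tr(ξ·H·ξ̄·H) ≥ 0. -/

import Mathlib

open Matrix

lemma aux_trace_sq_nonneg {n : ℕ} (M : Matrix (Fin n) (Fin n) ℝ) (hM : M.IsSymm) :
    0 ≤ Matrix.trace (M * M) := by
  have : M * M = Mᵀ * M := by rw [hM]
  rw [this]
  simp only [Matrix.trace, Matrix.diag, Matrix.mul_apply, Matrix.transpose_apply]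
  exact Finset.sum_nonneg fun i _ => Finset.sum_nonneg fun j _ => mul_self_nonneg _

lemma aux_psd {n : ℕ} (A H : Matrix (Fin n) (Fin n) ℝ) (hA : A.PosSemidef) (hH : H.IsSymm) :
    0 ≤ Matrix.trace (A * H * A * H) := by
  obtain ⟨S, hSsym', hSS⟩ : ∃ S : Matrix (Fin n) (Fin n) ℝ, S.IsHermitian ∧ S * S = A :=
    open scoped MatrixOrder in
    ⟨CFC.sqrt A, (Matrix.nonneg_iff_posSemidef.mp (CFC.sqrt_nonneg A)).1,
      CFC.sqrt_mul_sqrt_self A hA.nonneg⟩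
  have hSsym : Sᵀ = S := hSsym'
  have hM : (S * H * S).IsSymm := by
    simp [Matrix.IsSymm, Matrix.transpose_mul, hSsym, hH.eq, Matrix.mul_assoc]
  have e1 : A * H * A * H = S * (S * H * S * (S * H)) := by rw [← hSS]; noncomm_ring
  have e2 : S * H * S * (S * H) * S = (S * H * S) * (S * H * S) := by noncomm_ring
  rw [e1, Matrix.trace_mul_comm, e2]
  exact aux_trace_sq_nonneg _ hM

lemma aux_semi {n : ℕ} (A H : Matrix (Fin n) (Fin n) ℝ) (hAs : A.IsSymm)
    (h : (∀ v : Fin n → ℝ, 0 ≤ dotProduct v (A.mulVec v)) ∨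
         (∀ v : Fin n → ℝ, dotProduct v (A.mulVec v) ≤ 0))
    (hH : H.IsSymm) : 0 ≤ Matrix.trace (A * H * A * H) := by
  have herm : A.IsHermitian := by
    rw [Matrix.IsHermitian, Matrix.conjTranspose_eq_transpose_of_trivial]; exact hAs
  rcases h with h | h
  · exact aux_psd A H (.of_dotProduct_mulVec_nonneg herm fun x => by simpa using h x) hH
  · have hpsd : (-A).PosSemidef := by
      refine .of_dotProduct_mulVec_nonneg herm.neg fun x => ?_
      simpa [Matrix.neg_mulVec] using h x
    have e : (-A) * H * (-A) * H = A * H * A * H := by noncomm_ring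
    have := aux_psd (-A) H hpsd hH
    rwa [e] at this

lemma aux_trmap {n : ℕ} (M : Matrix (Fin n) (Fin n) ℝ) :
    Matrix.trace (M.map Complex.ofReal) = Complex.ofReal (Matrix.trace M) := by
  simp [Matrix.trace, Matrix.diag, Matrix.map_apply]

lemma aux_mapmul {n : ℕ} (P Q : Matrix (Fin n) (Fin n) ℝ) :
    (P * Q).map Complex.ofReal = P.map Complex.ofReal * Q.map Complex.ofReal := by
  ext i j
  simp [Matrix.mul_apply, Matrix.map_apply]

/-- if `ξ` is complex symmetric with `Re ξ` and `Im ξ` each positive or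
negative semidefinite, then for every real symmetric `H`, `Tr(ξ·H·ξ̄·H)` is real and
nonnegative. -/
theorem statement3 (n : ℕ) (hn : 1 ≤ n)
    (ξ : Matrix (Fin n) (Fin n) ℂ) (hξsym : ξ.IsSymm)
    (hRe : (∀ v : Fin n → ℝ, 0 ≤ dotProduct v ((ξ.map Complex.re).mulVec v)) ∨
           (∀ v : Fin n → ℝ, dotProduct v ((ξ.map Complex.re).mulVec v) ≤ 0))
    (hIm : (∀ v : Fin n → ℝ, 0 ≤ dotProduct v ((ξ.map Complex.im).mulVec v)) ∨
           (∀ v : Fin n → ℝ, dotProduct v ((ξ.map Complex.im).mulVec v) ≤ 0))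
    (H : Matrix (Fin n) (Fin n) ℝ) (hHsym : H.IsSymm) :
    (Matrix.trace
        (ξ * H.map Complex.ofReal * ξ.map (starRingEnd ℂ) * H.map Complex.ofReal)).im = 0 ∧
    0 ≤ (Matrix.trace
        (ξ * H.map Complex.ofReal * ξ.map (starRingEnd ℂ) * H.map Complex.ofReal)).re := by
  set A : Matrix (Fin n) (Fin n) ℝ := ξ.map Complex.re with hAdef
  set B : Matrix (Fin n) (Fin n) ℝ := ξ.map Complex.im with hBdef
  have hAs : A.IsSymm := by
    ext i j
    simp [hAdef, Matrix.map_apply, ← hξsym.apply i j]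
  have hBs : B.IsSymm := by
    ext i j
    simp [hBdef, Matrix.map_apply, ← hξsym.apply i j]
  set X := A.map Complex.ofReal with hX
  set Y := B.map Complex.ofReal with hY
  set Hc := H.map Complex.ofReal with hHc
  have hxi : ξ = X + Complex.I • Y := by
    ext i j
    simp only [hX, hY, Matrix.add_apply, Matrix.smul_apply, Matrix.map_apply, smul_eq_mul,
      hAdef, hBdef]
    apply Complex.ext <;> simp
  have hconj : ξ.map (starRingEnd ℂ) = X - Complex.I • Y := by
    ext i j
    simp only [hX, hY, Matrix.sub_apply, Matrix.smul_apply, Matrix.map_apply, smul_eq_mul,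
      hAdef, hBdef]
    apply Complex.ext <;> simp
  have expand : ξ * Hc * ξ.map (starRingEnd ℂ) * Hc
      = X*Hc*X*Hc + Y*Hc*Y*Hc + (Complex.I • (Y*Hc*X*Hc) - Complex.I • (X*Hc*Y*Hc)) := by
    rw [hconj, hxi]
    simp only [add_mul, sub_mul, mul_sub, mul_add, Matrix.smul_mul, Matrix.mul_smul, smul_smul,
      Complex.I_mul_I, neg_smul, one_smul]
    abel_nf
    simp [Matrix.smul_mul, smul_smul]
  have cross : Matrix.trace (Y*Hc*X*Hc) = Matrix.trace (X*Hc*Y*Hc) := by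
    have : Y*Hc*X*Hc = (Y*Hc)*(X*Hc) := by rw [Matrix.mul_assoc]
    rw [this, Matrix.trace_mul_comm, ← Matrix.mul_assoc]
  have key : Matrix.trace (ξ * Hc * ξ.map (starRingEnd ℂ) * Hc)
      = ((Matrix.trace (A*H*A*H) + Matrix.trace (B*H*B*H) : ℝ) : ℂ) := by
    rw [expand]
    simp only [Matrix.trace_add, Matrix.trace_sub, Matrix.trace_smul, cross, sub_self,
      smul_zero, add_zero]
    have eA : X*Hc*X*Hc = (A*H*A*H).map Complex.ofReal := by
      simp only [hX, hHc, aux_mapmul]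
    have eB : Y*Hc*Y*Hc = (B*H*B*H).map Complex.ofReal := by
      simp only [hY, hHc, aux_mapmul]
    rw [eA, eB, aux_trmap, aux_trmap]
    push_cast
    ring
  have h1 : 0 ≤ Matrix.trace (A*H*A*H) := aux_semi A H hAs hRe hHsym
  have h2 : 0 ≤ Matrix.trace (B*H*B*H) := aux_semi B H hBs hIm hHsym
  rw [key]
  constructor
  · simp
  · simpa using add_nonneg h1 h2
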